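/- Let H be a real Hilbert space and I the identity map on H. Then for every n ≥ 1 and all x, y ∈ H, the n-th Fitzpatrick function of I satisfies φ⁽ⁿ⁾_I(x,y) = (n/(2(n+1)))‖x-y‖² + ⟨x,y⟩. -/

import Mathlib

open scoped RealInnerProductSpace

section aux
variable {H : Type*} [NormedAddCommGroup H] [InnerProductSpace ℝ H]

lemma fitz_two_term (a b : H) (s t : ℝ) (hs : 0 < s) (ht : 0 < t) :
    ‖a + b‖ ^ 2 / (s + t) ≤ ‖a‖ ^ 2 / s + ‖b‖ ^ 2 / t := by
  have hQ : (0:ℝ) ≤ ⟪t • a - s • b, t • a - s • b⟫ := real_inner_self_nonneg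
  have hab : ‖a + b‖ ^ 2 = ‖a‖ ^ 2 + 2 * ⟪a, b⟫ + ‖b‖ ^ 2 := norm_add_sq_real a b
  simp only [inner_sub_left, inner_sub_right, real_inner_smul_left, real_inner_smul_right,
    real_inner_self_eq_norm_sq, real_inner_comm b a, norm_smul, Real.norm_eq_abs, mul_pow, sq_abs] at hQ
  rw [div_add_div _ _ (ne_of_gt hs) (ne_of_gt ht), div_le_div_iff₀ (by linarith) (by positivity)]
  nlinarith [hQ, mul_pos hs ht, real_inner_comm a b]

lemma fitz_identity (n : ℕ) (hn : 1 ≤ n) (x y : H) (c : ℕ → H) :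
    ⟪x - c 1, c 1⟫ + (∑ i ∈ Finset.Icc 2 n, ⟪c (i - 1) - c i, c i⟫) + ⟪c n, y⟫
      = (‖x‖ ^ 2 + ‖y‖ ^ 2) / 2
        - (‖x - c 1‖ ^ 2 + (∑ i ∈ Finset.Icc 2 n, ‖c (i - 1) - c i‖ ^ 2) + ‖c n - y‖ ^ 2) / 2 := by
  induction n, hn using Nat.le_induction with
  | base =>
    rw [Finset.Icc_eq_empty_of_lt (by norm_num : (1:ℕ) < 2), Finset.sum_empty, Finset.sum_empty]
    have h1 : ‖x - c 1‖ ^ 2 = ‖x‖ ^ 2 - 2 * ⟪x, c 1⟫ + ‖c 1‖ ^ 2 := norm_sub_sq_real x (c 1)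
    have h2 : ‖c 1 - y‖ ^ 2 = ‖c 1‖ ^ 2 - 2 * ⟪c 1, y⟫ + ‖y‖ ^ 2 := norm_sub_sq_real (c 1) y
    rw [inner_sub_left, real_inner_self_eq_norm_sq]
    linarith
  | succ n hn ih =>
    rw [Finset.sum_Icc_succ_top (by omega : 2 ≤ n + 1),
      Finset.sum_Icc_succ_top (by omega : 2 ≤ n + 1)]
    simp only [Nat.add_sub_cancel]
    have h1 : ‖c n - c (n+1)‖ ^ 2 = ‖c n‖ ^ 2 - 2 * ⟪c n, c (n+1)⟫ + ‖c (n+1)‖ ^ 2 :=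
      norm_sub_sq_real _ _
    have h2 : ‖c (n+1) - y‖ ^ 2 = ‖c (n+1)‖ ^ 2 - 2 * ⟪c (n+1), y⟫ + ‖y‖ ^ 2 :=
      norm_sub_sq_real _ _
    have h3 : ‖c n - y‖ ^ 2 = ‖c n‖ ^ 2 - 2 * ⟪c n, y⟫ + ‖y‖ ^ 2 := norm_sub_sq_real _ _
    have h4 : ⟪c n - c (n+1), c (n+1)⟫ = ⟪c n, c (n+1)⟫ - ‖c (n+1)‖ ^ 2 := by
      rw [inner_sub_left, real_inner_self_eq_norm_sq]
    linarith

lemma fitz_chain (n : ℕ) (hn : 1 ≤ n) (x : H) (c : ℕ → H) :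
    ‖x - c n‖ ^ 2 / n ≤ ‖x - c 1‖ ^ 2 + ∑ i ∈ Finset.Icc 2 n, ‖c (i - 1) - c i‖ ^ 2 := by
  induction n, hn using Nat.le_induction with
  | base =>
    rw [Finset.Icc_eq_empty_of_lt (by norm_num : (1:ℕ) < 2), Finset.sum_empty]
    simp
  | succ n hn ih =>
    rw [Finset.sum_Icc_succ_top (by omega : 2 ≤ n + 1)]
    simp only [Nat.add_sub_cancel]
    have hn0 : (0:ℝ) < n := by exact_mod_cast hn
    have h2 := fitz_two_term (x - c n) (c n - c (n+1)) (n : ℝ) 1 hn0 one_pos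
    rw [div_one] at h2
    have h3 : x - c n + (c n - c (n+1)) = x - c (n+1) := by abel
    rw [h3] at h2
    push_cast
    linarith

end aux

/-- The `n`-th Fitzpatrick function of the identity on a real Hilbert space:
`φ⁽ⁿ⁾_I(x,y) = (n/(2(n+1)))‖x-y‖² + ⟨x,y⟩`. -/
theorem fitzpatrick_n_identity {H : Type*} [NormedAddCommGroup H]
    [InnerProductSpace ℝ H] [CompleteSpace H] (n : ℕ) (hn : 1 ≤ n) (x y : H) :
    IsLUB {r : ℝ | ∃ c : ℕ → H,
        r = ⟪x - c 1, c 1⟫ + (∑ i ∈ Finset.Icc 2 n, ⟪c (i - 1) - c i, c i⟫) + ⟪c n, y⟫}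
      ((n : ℝ) / (2 * ((n : ℝ) + 1)) * ‖x - y‖ ^ 2 + ⟪x, y⟫) := by
  have hn0 : (0 : ℝ) < n := by exact_mod_cast hn
  have hn1 : (0 : ℝ) < (n : ℝ) + 1 := by linarith
  have hxy : ‖x - y‖ ^ 2 = ‖x‖ ^ 2 - 2 * ⟪x, y⟫ + ‖y‖ ^ 2 := norm_sub_sq_real x y
  have e1 : (n : ℝ) / (2 * ((n : ℝ) + 1)) * ‖x - y‖ ^ 2
      = ‖x - y‖ ^ 2 / 2 - ‖x - y‖ ^ 2 / ((n : ℝ) + 1) / 2 := by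
    field_simp
    ring
  apply IsGreatest.isLUB
  constructor
  · -- the sup is attained at c i = x + (i/(n+1)) (y - x)
    refine ⟨fun i => x + (((i : ℝ)) / ((n : ℝ) + 1)) • (y - x), ?_⟩
    set c : ℕ → H := fun i => x + (((i : ℝ)) / ((n : ℝ) + 1)) • (y - x) with hc
    have hnv : ‖(-(1 / ((n : ℝ) + 1))) • (y - x)‖ ^ 2 = ‖x - y‖ ^ 2 / ((n : ℝ) + 1) ^ 2 := by
      rw [norm_smul, norm_sub_rev y x, Real.norm_eq_abs, abs_neg,
        abs_of_pos (by positivity : (0:ℝ) < 1 / ((n : ℝ) + 1)), mul_pow]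
      field_simp
    have hd1 : x - c 1 = (-(1 / ((n : ℝ) + 1))) • (y - x) := by
      simp only [hc, Nat.cast_one]
      module
    have hdn : c n - y = (-(1 / ((n : ℝ) + 1))) • (y - x) := by
      simp only [hc]
      have h : ((n : ℝ) / ((n : ℝ) + 1)) - 1 = -(1 / ((n : ℝ) + 1)) := by field_simp; ring
      rw [← h]
      module
    have hdi : ∀ i ∈ Finset.Icc 2 n, ‖c (i - 1) - c i‖ ^ 2 = ‖x - y‖ ^ 2 / ((n : ℝ) + 1) ^ 2 := by
      intro i hi
      have hi1 : 1 ≤ i := by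
        rw [Finset.mem_Icc] at hi; omega
      have hcast : ((i - 1 : ℕ) : ℝ) = (i : ℝ) - 1 := by
        push_cast [hi1]; ring
      have hd : c (i - 1) - c i = (-(1 / ((n : ℝ) + 1))) • (y - x) := by
        simp only [hc, hcast]
        module
      rw [hd, hnv]
    rw [fitz_identity n hn x y c, hd1, hdn, hnv, Finset.sum_congr rfl hdi, Finset.sum_const,
      Nat.card_Icc, nsmul_eq_mul]
    have hcard : ((n + 1 - 2 : ℕ) : ℝ) = (n : ℝ) - 1 := by
      have : n + 1 - 2 = n - 1 := by omega
      rw [this]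
      push_cast [hn]; ring
    rw [hcard]
    have h2 : ⟪x, y⟫ = (‖x‖ ^ 2 + ‖y‖ ^ 2 - ‖x - y‖ ^ 2) / 2 := by linarith
    rw [h2]
    field_simp
    ring
  · -- upper bound
    rintro r ⟨c, rfl⟩
    rw [fitz_identity n hn x y c]
    have hchain := fitz_chain n hn x c
    have hlast := fitz_two_term (x - c n) (c n - y) (n : ℝ) 1 hn0 one_pos
    rw [div_one] at hlast
    have h3 : x - c n + (c n - y) = x - y := by abel
    rw [h3] at hlast
    rw [e1]
    have e2 : ‖x - y‖ ^ 2 / ((n : ℝ) + 1)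
        ≤ ‖x - c 1‖ ^ 2 + (∑ i ∈ Finset.Icc 2 n, ‖c (i - 1) - c i‖ ^ 2) + ‖c n - y‖ ^ 2 := by
      linarith
    linarith
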